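/- (Proposition 1: medial axis limited reconstruction equals opening.) Let Ω ⊆ ℝ² be open, bounded, and nonempty, and let ρ > 0. Then the limited reconstruction of Ω by g_ρ equals the morphological opening: ⋃_{x ∈ g_ρ} Metric.ball x (r x) = (Ω ⊖ B_ρ) ⊕ B_ρ. -/

import Mathlib

open Metric Set

noncomputable section

abbrev Plane := EuclideanSpace ℝ (Fin 2)

/-- Erosion of `Ω` by the open ball of radius `ρ`. -/
def erosion (Ω : Set Plane) (ρ : ℝ) : Set Plane := {x | Metric.ball x ρ ⊆ Ω}

/-- Dilation of `A` by the open ball of radius `ρ`. -/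
def dilation (A : Set Plane) (ρ : ℝ) : Set Plane := ⋃ a ∈ A, Metric.ball a ρ

/-- Morphological opening of `Ω` by the open ball of radius `ρ`. -/
def opening (Ω : Set Plane) (ρ : ℝ) : Set Plane := dilation (erosion Ω ρ) ρ

/-- Radius function: distance to the complement of `Ω`. -/
def radiusFn (Ω : Set Plane) (x : Plane) : ℝ := Metric.infDist x Ωᶜ

/-- An open ball `Metric.ball c ρ` is a *maximal inscribed ball* of `Ω` if it is contained
in `Ω` and every open ball `B'` with `Metric.ball c ρ ⊆ B' ⊆ Ω` equals `Metric.ball c ρ`. -/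
def IsMaxInscribedBall (Ω : Set Plane) (c : Plane) (ρ : ℝ) : Prop :=
  Metric.ball c ρ ⊆ Ω ∧
    ∀ (c' : Plane) (ρ' : ℝ), Metric.ball c ρ ⊆ Metric.ball c' ρ' →
      Metric.ball c' ρ' ⊆ Ω → Metric.ball c' ρ' = Metric.ball c ρ

/-- The medial axis of `Ω`. -/
def medialAxis (Ω : Set Plane) : Set Plane :=
  {x ∈ Ω | IsMaxInscribedBall Ω x (radiusFn Ω x)}

/-- The subset `g_ρ` of the medial axis whose radius function is at least `ρ`. -/
def gSet (Ω : Set Plane) (ρ : ℝ) : Set Plane := {x ∈ medialAxis Ω | ρ ≤ radiusFn Ω x}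

/-- Proposition 1: the medial axis limited reconstruction by `g_ρ` equals the
morphological opening of `Ω` by the ball of radius `ρ`. -/
lemma dist_add_smul (a : Plane) {u : Plane} (hu : ‖u‖ = 1) {s : ℝ} (hs : 0 ≤ s) :
    dist (a + s • u) a = s := by
  simp [dist_eq_norm, norm_smul, abs_of_nonneg hs, hu]

lemma exists_dir (a b : Plane) : ∃ u : Plane, ‖u‖ = 1 ∧
    ∀ s : ℝ, 0 ≤ s → dist (a + s • u) b = dist a b + s := by
  by_cases h : a = b
  · refine ⟨EuclideanSpace.single 0 1, by simp [EuclideanSpace.norm_single], fun s hs => ?_⟩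
    subst h
    simp [dist_eq_norm, norm_smul, abs_of_nonneg hs, EuclideanSpace.norm_single]
  · have hab : a - b ≠ 0 := sub_ne_zero.2 h
    have hn : ‖a - b‖ ≠ 0 := norm_ne_zero_iff.2 hab
    refine ⟨‖a - b‖⁻¹ • (a - b), ?_, fun s hs => ?_⟩
    · rw [norm_smul, norm_inv, norm_norm, inv_mul_cancel₀ hn]
    · have key : a + s • ‖a - b‖⁻¹ • (a - b) - b = (1 + s * ‖a - b‖⁻¹) • (a - b) := by
        rw [add_smul, one_smul, smul_smul]
        abel
      rw [dist_eq_norm, key, norm_smul, dist_eq_norm]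
      have h1 : (0:ℝ) ≤ 1 + s * ‖a - b‖⁻¹ := by positivity
      rw [Real.norm_eq_abs, abs_of_nonneg h1, add_mul, one_mul, mul_assoc,
        inv_mul_cancel₀ hn, mul_one]

lemma ball_subset_ball_dist {a b : Plane} {ε δ : ℝ} (hε : 0 < ε)
    (h : ball a ε ⊆ ball b δ) : dist a b + ε ≤ δ := by
  obtain ⟨u, hu, hd⟩ := exists_dir a b
  by_contra hlt
  push_neg at hlt
  have hdab : 0 ≤ dist a b := dist_nonneg
  set s : ℝ := max 0 (δ - dist a b) with hs
  have hs0 : 0 ≤ s := le_max_left _ _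
  have hsε : s < ε := max_lt hε (by linarith)
  have hmem : a + s • u ∈ ball a ε := by
    rw [mem_ball, dist_add_smul a hu hs0]; exact hsε
  have h2 := mem_ball.1 (h hmem)
  rw [hd s hs0] at h2
  have h3 : δ - dist a b ≤ s := le_max_right _ _
  linarith

lemma compl_nonempty {Ω : Set Plane} (hbd : Bornology.IsBounded Ω) : Ωᶜ.Nonempty := by
  obtain ⟨r, hr⟩ := hbd.subset_closedBall 0
  refine ⟨(|r| + 1) • EuclideanSpace.single 0 1, fun hmem => ?_⟩
  have h2 := hr hmem
  rw [mem_closedBall, dist_zero_right, norm_smul, Real.norm_eq_abs,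
    EuclideanSpace.norm_single, norm_one, mul_one, abs_of_nonneg (by positivity)] at h2
  linarith [le_abs_self r]

lemma le_radius_of_ball_subset {Ω : Set Plane} (hbd : Bornology.IsBounded Ω) {c : Plane}
    {s : ℝ} (h : ball c s ⊆ Ω) : s ≤ radiusFn Ω c := by
  by_contra hlt
  push_neg at hlt
  rw [radiusFn] at hlt
  obtain ⟨w, hw, hdw⟩ := (infDist_lt_iff (compl_nonempty hbd)).1 hlt
  exact hw (h (by rwa [mem_ball, dist_comm]))

lemma ball_radius_subset (Ω : Set Plane) (c : Plane) : ball c (radiusFn Ω c) ⊆ Ω :=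
  ball_infDist_compl_subset

theorem limitedReconstruction_eq_opening (Ω : Set Plane) (hΩ : IsOpen Ω)
    (hbd : Bornology.IsBounded Ω) (hne : Ω.Nonempty) (ρ : ℝ) (hρ : 0 < ρ) :
    (⋃ x ∈ gSet Ω ρ, Metric.ball x (radiusFn Ω x)) = opening Ω ρ := by
  ext z
  simp only [mem_iUnion, exists_prop, opening, dilation, erosion, mem_setOf_eq]
  constructor
  · rintro ⟨x, ⟨⟨hxΩ, hsub, hmax⟩, hρr⟩, hz⟩
    set r := radiusFn Ω x with hr
    have hballΩ : ball x r ⊆ Ω := ball_radius_subset Ω x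
    set d := dist x z with hd
    have hdr : d < r := by rw [hd, dist_comm]; exact mem_ball.1 hz
    by_cases hd0 : d = 0
    · refine ⟨x, hballΩ.trans' (ball_subset_ball hρr) |>.trans (by rfl) |> fun _ => ?_, ?_⟩
      · exact (ball_subset_ball hρr).trans hballΩ
      · rw [mem_ball, dist_comm, ← hd, hd0]; exact hρ
    · have hdpos : 0 < d := lt_of_le_of_ne dist_nonneg (Ne.symm hd0)
      set s := min d (r - ρ) with hs
      have hs0 : 0 ≤ s := le_min hdpos.le (by linarith)
      have hsd : s ≤ d := min_le_left _ _
      set t := s / d with ht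
      have ht0 : 0 ≤ t := div_nonneg hs0 hdpos.le
      set y := AffineMap.lineMap x z t with hy
      have hyx : dist y x = s := by
        rw [hy, dist_lineMap_left, Real.norm_eq_abs, abs_of_nonneg ht0, ht, ← hd,
          div_mul_cancel₀ _ hd0]
      have hyz : dist y z = d - s := by
        rw [hy, dist_lineMap_right, Real.norm_eq_abs, ← hd]
        have h1t : 0 ≤ 1 - t := by
          rw [sub_nonneg, ht]; exact div_le_one_of_le₀ hsd hdpos.le
        rw [abs_of_nonneg h1t, sub_mul, one_mul, ht, div_mul_cancel₀ _ hd0]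
      refine ⟨y, ?_, ?_⟩
      · refine (ball_subset_ball' ?_).trans hballΩ
        have : s ≤ r - ρ := min_le_right _ _
        linarith [hyx, this]
      · rw [mem_ball, dist_comm, hyz]
        have h1 : d - ρ < s := lt_min (by linarith) (by linarith)
        linarith
  · rintro ⟨y, hy, hzy⟩
    have hry : ρ ≤ radiusFn Ω y := le_radius_of_ball_subset hbd hy
    set ry := radiusFn Ω y with hryd
    set S : Set Plane := {c | dist c y + ry ≤ radiusFn Ω c} with hS
    have hyS : y ∈ S := by simp [hS]; exact hryd.le
    have hSsub : S ⊆ Ω := by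
      intro c hc
      have h1 : ry ≤ radiusFn Ω c := le_trans (by linarith [dist_nonneg (x := c) (y := y)]) hc
      have : c ∈ ball c (radiusFn Ω c) := mem_ball_self (by linarith)
      exact ball_radius_subset Ω c this
    have hScl : IsClosed S := by
      have : S = {c | dist c y + ry ≤ radiusFn Ω c} := hS
      exact isClosed_le (by fun_prop) (continuous_infDist_pt _)
    have hScomp : IsCompact S :=
      isCompact_of_isClosed_isBounded hScl (hbd.subset hSsub)
    obtain ⟨x, hxS, hmaxr⟩ := hScomp.exists_isMaxOn ⟨y, hyS⟩
      (continuous_infDist_pt Ωᶜ).continuousOn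
    set rx := radiusFn Ω x with hrx
    have hxSd : dist x y + ry ≤ rx := hxS
    have hryrx : ry ≤ rx := by linarith [dist_nonneg (x := x) (y := y)]
    have hρrx : ρ ≤ rx := le_trans hry hryrx
    have hballx : ball x rx ⊆ Ω := ball_radius_subset Ω x
    have hysub : ball y ry ⊆ ball x rx := ball_subset_ball' (by rw [dist_comm]; linarith)
    have hxΩ : x ∈ Ω := hballx (mem_ball_self (by linarith))
    refine ⟨x, ⟨⟨hxΩ, hballx, ?_⟩, hρrx⟩, hysub ((ball_subset_ball hry) hzy)⟩
    intro c' ρ' h1 h2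
    have hρ'r : ρ' ≤ radiusFn Ω c' := le_radius_of_ball_subset hbd h2
    have hdx : dist x c' + rx ≤ ρ' := ball_subset_ball_dist (by linarith) h1
    have hc'S : c' ∈ S := by
      have hd1 : dist c' y ≤ dist c' x + dist x y := dist_triangle _ _ _
      have : dist c' y + ry ≤ radiusFn Ω c' := by
        rw [dist_comm c' x] at hd1
        linarith
      exact this
    have hle : radiusFn Ω c' ≤ rx := hmaxr hc'S
    have hd0 : dist x c' = 0 := le_antisymm (by linarith) dist_nonneg
    have hxc : x = c' := by rwa [dist_eq_zero] at hd0
    have hρ'rx : ρ' = rx := le_antisymm (by linarith) (by rw [hd0] at hdx; linarith)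
    rw [hρ'rx, ← hxc]
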